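/- For every integer d ≥ 1 there is a constant C = C(d) > 0 such that the following holds. Let P ⊆ ℝ^d (with the Euclidean metric) be a finite set of n ≥ 2 points with spread Φ, let ε ∈ (0, 1/2], let p₁, …, p_n be an exact greedy permutation of P with prefixes P_i = {p₁, …, p_i} and radii r_{i−1} = dist(p_i, P_{i−1}), and let G = (P, E) be the directed graph with E = {(p_j, p_i) : j < i and dist(p_j, p_i) ≤ 8·r_{i−1}/ε}. Then: (a) |E| ≤ C·n·ε^{−d}; and (b) for every query point q ∈ ℝ^d, every maximal first-improving greedy walk v₀ = p₁, v₁, v₂, … in G — namely, the walk in which v_{m+1} is the out-neighbor p_i of v_m of smallest index i among those satisfying dist(q, p_i) ≤ (1 − ε/4)·dist(q, v_m), and the walk stops at a vertex having no out-neighbor u with dist(q, u) ≤ (1 − ε/4)·dist(q, current vertex) — is finite, has at most C·ε^{−1}·(1 + log₂(1 + Φ)) steps, and its final vertex v_k satisfies dist(q, v_k) ≤ (1 + ε)·dist(q, P). -/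

import Mathlib

/-- `p : Fin n → X` lists the points of a finite set in an exact greedy permutation
order (0-based indexing): the points are distinct, and for each `i`, the point `p i`
attains the maximum distance to the prefix `P_i = {p j : j < i}` among all remaining
points `p k`, `k ≥ i`. -/
def IsGreedyPerm {X : Type*} [MetricSpace X] {n : ℕ} (p : Fin n → X) : Prop :=
  Function.Injective p ∧
    ∀ i k : Fin n, (i : ℕ) ≤ (k : ℕ) →
      Metric.infDist (p k) (p '' {j : Fin n | (j : ℕ) < (i : ℕ)}) ≤
        Metric.infDist (p i) (p '' {j : Fin n | (j : ℕ) < (i : ℕ)})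

/-- The radius `r_{i-1} = dist(p_i, P_{i-1})` of the greedy permutation, in 0-based
indexing: the distance of `p i` to the prefix `{p j : j < i}`. -/
noncomputable def gpRadius {X : Type*} [MetricSpace X] {n : ℕ} (p : Fin n → X)
    (i : Fin n) : ℝ :=
  Metric.infDist (p i) (p '' {j : Fin n | (j : ℕ) < (i : ℕ)})

/-- The greedy-permutation graph: a directed edge from `p j` to `p i` whenever
`j < i` and `dist (p j) (p i) ≤ 8 r_{i-1} / ε`. -/
def gpEdge {X : Type*} [MetricSpace X] {n : ℕ} (p : Fin n → X) (ε : ℝ)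
    (j i : Fin n) : Prop :=
  (j : ℕ) < (i : ℕ) ∧ dist (p j) (p i) ≤ 8 * gpRadius p i / ε

set_option linter.unusedVariables false
set_option linter.unusedSectionVars false
set_option maxHeartbeats 1000000
section GP
variable {X : Type*} [MetricSpace X] {n : ℕ} {p : Fin n → X}

lemma gp_prefix_fin (i : Fin n) : (p '' {j : Fin n | (j : ℕ) < (i : ℕ)}).Finite :=
  (Set.toFinite _).image p

lemma gp_prefix_ne (i : Fin n) (hi : 1 ≤ (i : ℕ)) :
    (p '' {j : Fin n | (j : ℕ) < (i : ℕ)}).Nonempty :=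
  ⟨p ⟨0, i.pos⟩, ⟨⟨0, i.pos⟩, by show (0:ℕ) < (i:ℕ); omega, rfl⟩⟩

lemma gp_radius_nonneg (i : Fin n) : 0 ≤ gpRadius p i := Metric.infDist_nonneg

lemma gp_sep (hp : IsGreedyPerm p) (a b : Fin n) (hab : (a : ℕ) < (b : ℕ)) :
    gpRadius p b ≤ dist (p a) (p b) := by
  rw [dist_comm]
  exact Metric.infDist_le_dist_of_mem ⟨a, hab, rfl⟩

lemma gp_mono (hp : IsGreedyPerm p) (a b : Fin n) (ha : 1 ≤ (a : ℕ))
    (hab : (a : ℕ) ≤ (b : ℕ)) : gpRadius p b ≤ gpRadius p a := by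
  calc gpRadius p b ≤ Metric.infDist (p b) (p '' {j : Fin n | (j : ℕ) < (a : ℕ)}) := by
        apply Metric.infDist_le_infDist_of_subset
        · exact Set.image_mono (fun j hj => lt_of_lt_of_le hj hab)
        · exact gp_prefix_ne a ha
    _ ≤ gpRadius p a := hp.2 a b hab

lemma gp_pos (hp : IsGreedyPerm p) (a : Fin n) (ha : 1 ≤ (a : ℕ)) :
    0 < gpRadius p a := by
  rcases (gp_radius_nonneg (p := p) a).lt_or_eq with h | h
  · exact h
  · exfalso
    have hcl : IsClosed (p '' {j : Fin n | (j : ℕ) < (a : ℕ)}) :=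
      (gp_prefix_fin a).isClosed
    have hmem : p a ∈ p '' {j : Fin n | (j : ℕ) < (a : ℕ)} := by
      rw [← hcl.closure_eq]
      exact Metric.mem_closure_iff_infDist_zero (gp_prefix_ne a ha) |>.2 h.symm
    obtain ⟨j, hj, hja⟩ := hmem
    have hje : j = a := hp.1 hja
    subst hje
    simpa using hj

lemma gp_cover (hp : IsGreedyPerm p) (i k : Fin n) (hik : (i : ℕ) ≤ (k : ℕ)) :
    Metric.infDist (p k) (p '' {j : Fin n | (j : ℕ) < (i : ℕ)}) ≤ gpRadius p i :=
  hp.2 i k hik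

end GP


open MeasureTheory Metric ENNReal in

lemma packing_bound {d : ℕ} (hd : 1 ≤ d) (s : Finset (EuclideanSpace ℝ (Fin d)))
    (c : EuclideanSpace ℝ (Fin d)) (r R : ℝ) (hr : 0 < r) (hR0 : 0 ≤ R)
    (hballs : ∀ x ∈ s, dist x c ≤ R)
    (hsep : ∀ x ∈ s, ∀ y ∈ s, x ≠ y → r ≤ dist x y) :
    (s.card : ℝ) * (r / 2) ^ d ≤ (R + r / 2) ^ d := by
  haveI : Nonempty (Fin d) := ⟨⟨0, hd⟩⟩
  haveI : Nontrivial (EuclideanSpace ℝ (Fin d)) := inferInstance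
  have hr2 : (0:ℝ) < r / 2 := by linarith
  set μ : Measure (EuclideanSpace ℝ (Fin d)) := volume with hμ
  have hvol : ∀ (x : EuclideanSpace ℝ (Fin d)) (ρ : ℝ), 0 ≤ ρ →
      μ (ball x ρ) = ENNReal.ofReal (ρ ^ d) * μ (ball 0 1) := by
    intro x ρ hρ
    rw [Measure.addHaar_ball μ x hρ, finrank_euclideanSpace_fin]
  have hdisj : (s : Set (EuclideanSpace ℝ (Fin d))).PairwiseDisjoint
      (fun x => ball x (r / 2)) := by
    intro x hx y hy hxy
    exact ball_disjoint_ball (by have := hsep x hx y hy hxy; linarith)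
  have hsum : μ (⋃ x ∈ s, ball x (r / 2)) = ∑ x ∈ s, μ (ball x (r / 2)) :=
    measure_biUnion_finset hdisj (fun x _ => measurableSet_ball)
  have hsub : (⋃ x ∈ s, ball x (r / 2)) ⊆ ball c (R + r / 2) := by
    intro z hz
    simp only [Set.mem_iUnion] at hz
    obtain ⟨x, hx, hzx⟩ := hz
    rw [mem_ball] at hzx ⊢
    have := hballs x hx
    have := dist_triangle z x c
    linarith
  have hle : (s.card : ℝ≥0∞) * (ENNReal.ofReal ((r/2) ^ d) * μ (ball 0 1)) ≤
      ENNReal.ofReal ((R + r/2) ^ d) * μ (ball 0 1) := by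
    calc (s.card : ℝ≥0∞) * (ENNReal.ofReal ((r/2) ^ d) * μ (ball 0 1))
        = ∑ x ∈ s, μ (ball x (r / 2)) := by
          rw [Finset.sum_congr rfl (fun x _ => hvol x (r/2) hr2.le), Finset.sum_const,
            nsmul_eq_mul]
      _ = μ (⋃ x ∈ s, ball x (r / 2)) := hsum.symm
      _ ≤ μ (ball c (R + r / 2)) := measure_mono hsub
      _ = ENNReal.ofReal ((R + r/2) ^ d) * μ (ball 0 1) := hvol c _ (by linarith)
  have hV0 : μ (ball 0 1) ≠ 0 := (measure_ball_pos μ 0 one_pos).ne'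
  have hVtop : μ (ball 0 1) ≠ ⊤ := measure_ball_lt_top.ne
  rw [← mul_assoc] at hle
  have hle2 : (s.card : ℝ≥0∞) * ENNReal.ofReal ((r/2) ^ d) ≤
      ENNReal.ofReal ((R + r/2) ^ d) := (ENNReal.mul_le_mul_iff_left hV0 hVtop).mp hle
  have : ENNReal.ofReal ((s.card : ℝ) * (r/2) ^ d) ≤ ENNReal.ofReal ((R + r/2) ^ d) := by
    rwa [ENNReal.ofReal_mul (by positivity), ENNReal.ofReal_natCast]
  have h := (ENNReal.ofReal_le_ofReal_iff (by positivity)).mp this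
  exact h


section Count
open Metric
variable {d n : ℕ} {p : Fin n → EuclideanSpace ℝ (Fin d)} {ε : ℝ}

lemma fiber_bound (hd : 1 ≤ d) (hp : IsGreedyPerm p) (hε : 0 < ε) (hε2 : ε ≤ 1/2)
    (i : Fin n) : ({j : Fin n | gpEdge p ε j i}).ncard ≤ (17:ℝ)^d / ε^d := by
  classical
  have hT : ({j : Fin n | gpEdge p ε j i}).Finite := Set.toFinite _
  rw [Set.ncard_eq_toFinset_card _ hT]
  set F := hT.toFinset with hF
  rcases Finset.eq_empty_or_nonempty F with he | hne
  · rw [he]; simp; positivity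
  · obtain ⟨j0, hj0⟩ := hne
    have hj0' : gpEdge p ε j0 i := by simpa [hF] using hj0
    have hi1 : 1 ≤ (i : ℕ) := lt_of_le_of_lt (Nat.zero_le _) hj0'.1
    set r := gpRadius p i with hrdef
    have hr : 0 < r := gp_pos hp i hi1
    set s := F.image p with hs
    have hcard : s.card = F.card := Finset.card_image_of_injective F hp.1
    have hpack := packing_bound hd s (p i) r (8*r/ε) hr (by positivity)
      (fun x hx => by
        simp only [hs, Finset.mem_image] at hx
        obtain ⟨j, hj, rfl⟩ := hx
        have hj' : gpEdge p ε j i := by simpa [hF] using hj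
        exact hj'.2)
      (fun x hx y hy hxy => by
        simp only [hs, Finset.mem_image] at hx hy
        obtain ⟨j, hj, rfl⟩ := hx
        obtain ⟨j', hj', rfl⟩ := hy
        have hje : gpEdge p ε j i := by simpa [hF] using hj
        have hje' : gpEdge p ε j' i := by simpa [hF] using hj'
        have hjj : j ≠ j' := fun h => hxy (by rw [h])
        rcases lt_or_gt_of_ne (fun h : (j:ℕ) = (j':ℕ) => hjj (Fin.ext h)) with h | h
        · calc r ≤ gpRadius p j' := gp_mono hp j' i (by omega) (le_of_lt hje'.1)
            _ ≤ dist (p j) (p j') := gp_sep hp j j' h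
        · calc r ≤ gpRadius p j := gp_mono hp j i (by omega) (le_of_lt hje.1)
            _ ≤ dist (p j) (p j') := by rw [dist_comm]; exact gp_sep hp j' j h)
    rw [hcard] at hpack
    have h2 : (8*r/ε + r/2 : ℝ) ≤ (r/2) * (17/ε) := by
      have key : r/2*(17/ε) - (8*r/ε + r/2) = (r*(1-ε))/(2*ε) := by field_simp; ring
      have hnn : (0:ℝ) ≤ (r*(1-ε))/(2*ε) :=
        div_nonneg (mul_nonneg hr.le (by linarith)) (by positivity)
      linarith [key, hnn]
    have h3 : ((F.card : ℝ)) * (r/2)^d ≤ ((r/2) * (17/ε))^d := by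
      calc ((F.card : ℝ)) * (r/2)^d ≤ (8*r/ε + r/2)^d := hpack
        _ ≤ ((r/2) * (17/ε))^d := pow_le_pow_left₀ (by positivity) h2 d
    rw [mul_pow, mul_comm ((r/2)^d)] at h3
    have hpow : (0:ℝ) < (r/2)^d := by positivity
    have h4 : ((F.card : ℝ)) ≤ (17/ε)^d := le_of_mul_le_mul_right h3 hpow
    rwa [div_pow] at h4

lemma edge_count (hd : 1 ≤ d) (hp : IsGreedyPerm p) (hε : 0 < ε) (hε2 : ε ≤ 1/2) :
    (Nat.card {e : Fin n × Fin n | gpEdge p ε e.1 e.2} : ℝ) ≤ (17:ℝ)^d * n / ε^d := by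
  classical
  set E := {e : Fin n × Fin n | gpEdge p ε e.1 e.2} with hE
  have hEfin : E.Finite := Set.toFinite _
  have h1 : Nat.card ↑E = hEfin.toFinset.card := by
    rw [Nat.card_coe_set_eq, Set.ncard_eq_toFinset_card _ hEfin]
  set G := hEfin.toFinset with hG
  have h2 : G.card = ∑ i : Fin n, (G.filter fun e => e.2 = i).card :=
    Finset.card_eq_sum_card_fiberwise (fun e _ => Finset.mem_univ e.2)
  have h3 : ∀ i : Fin n, ((G.filter fun e => e.2 = i).card : ℝ) ≤ (17:ℝ)^d / ε^d := by
    intro i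
    refine le_trans ?_ (fiber_bound hd hp hε hε2 i)
    have hTfin : ({j : Fin n | gpEdge p ε j i}).Finite := Set.toFinite _
    rw [Set.ncard_eq_toFinset_card _ hTfin]
    have : (G.filter fun e => e.2 = i).card ≤ hTfin.toFinset.card := by
      apply Finset.card_le_card_of_injOn (fun e => e.1)
      · intro e he
        simp only [Finset.mem_coe, Finset.mem_filter, hG, Set.Finite.mem_toFinset] at he ⊢
        obtain ⟨h4, h5⟩ := he
        rw [hE, Set.mem_setOf_eq] at h4
        rw [Set.mem_setOf_eq]
        rwa [h5] at h4
      · intro e he e' he' hee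
        simp only [Finset.mem_coe, Finset.mem_filter] at he he'
        exact Prod.ext hee (he.2.trans he'.2.symm)
    exact_mod_cast this
  rw [h1, h2]
  push_cast
  calc ∑ i : Fin n, ((G.filter fun e => e.2 = i).card : ℝ)
      ≤ ∑ _i : Fin n, (17:ℝ)^d / ε^d := Finset.sum_le_sum (fun i _ => h3 i)
    _ = n * ((17:ℝ)^d / ε^d) := by rw [Finset.sum_const, Finset.card_univ]; simp
    _ = (17:ℝ)^d * n / ε^d := by ring

end Count

section Walk
open Metric Real
variable {X : Type*} [MetricSpace X] {n : ℕ} {p : Fin n → X} {ε : ℝ}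

lemma walk_ann (hp : IsGreedyPerm p) (hε : 0 < ε) (hε2 : ε ≤ 1/2)
    (q : X) (v : ℕ → Fin n) (k : ℕ) (hv0 : (v 0 : ℕ) = 0)
    (hstep : ∀ m < k,
      gpEdge p ε (v m) (v (m + 1)) ∧
      dist q (p (v (m + 1))) ≤ (1 - ε / 4) * dist q (p (v m)) ∧
      (∀ i : Fin n, gpEdge p ε (v m) i →
        dist q (p i) ≤ (1 - ε / 4) * dist q (p (v m)) →
        (v (m + 1) : ℕ) ≤ (i : ℕ)))
    (hmax : ∀ i : Fin n, gpEdge p ε (v k) i →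
      ¬(dist q (p i) ≤ (1 - ε / 4) * dist q (p (v k)))) :
    dist q (p (v k)) ≤ (1 + ε) * Metric.infDist q (Set.range p) := by
  classical
  by_contra hcon
  push_neg at hcon
  set D := Metric.infDist q (Set.range p) with hD
  have hD0 : 0 ≤ D := Metric.infDist_nonneg
  -- distances along the walk are nonincreasing
  have hstep' : ∀ m < k, dist q (p (v (m+1))) ≤ dist q (p (v m)) := by
    intro m hm
    have h1 := (hstep m hm).2.1
    nlinarith [dist_nonneg (x := q) (y := p (v m))]
  have hdec : ∀ j ≤ k, ∀ i ≤ j, dist q (p (v j)) ≤ dist q (p (v i)) := by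
    intro j hj
    induction j with
    | zero => intro i hi; have hi0 : i = 0 := by omega
              subst hi0; exact le_rfl
    | succ j ih =>
      intro i hi
      rcases Nat.lt_or_ge i (j+1) with h | h
      · exact le_trans (hstep' j (by omega)) (ih (by omega) i (by omega))
      · have : i = j + 1 := by omega
        subst this; exact le_rfl
  have hδk_pos : 0 < dist q (p (v k)) :=
    lt_of_le_of_lt (mul_nonneg (by linarith) hD0) hcon
  have hδpos : ∀ m ≤ k, 0 < dist q (p (v m)) :=
    fun m hm => lt_of_lt_of_le hδk_pos (hdec k le_rfl m hm)
  have hDm : ∀ m ≤ k, D < (1 - ε/2) * dist q (p (v m)) := by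
    intro m hm
    have h1 : (1+ε) * D < dist q (p (v m)) := lt_of_lt_of_le hcon (hdec k le_rfl m hm)
    nlinarith [hδpos m hm, mul_nonneg hD0 hε.le]
  -- the invariant
  set P : ℕ → Prop := fun m => ∀ a : Fin n, (a : ℕ) ≤ (v m : ℕ) →
    (1 - ε/4) * dist q (p (v m)) < dist q (p a) with hPdef
  -- nearest point of q in P
  have hne : (Set.range p).Nonempty := ⟨p (v 0), Set.mem_range_self _⟩
  obtain ⟨y, hy, hyd⟩ := (Set.finite_range p).isCompact.exists_infDist_eq_dist hne q
  obtain ⟨t, rfl⟩ := hy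
  have hDt : D = dist q (p t) := hyd
  -- witness construction
  have hwit : ∀ m ≤ k, P m → ∃ b : Fin n, ((v m : ℕ) < (b : ℕ)) ∧
      gpEdge p ε (v m) b ∧ dist q (p b) ≤ (1 - ε/4) * dist q (p (v m)) ∧
      ∀ c : Fin n, 1 ≤ (c : ℕ) → (c : ℕ) ≤ (b : ℕ) →
        ε/4 * dist q (p (v m)) ≤ gpRadius p c := by
    intro m hm hP
    set δm := dist q (p (v m)) with hδm
    have hδ : 0 < δm := hδpos m hm
    have hDδ : D < (1 - ε/2) * δm := hDm m hm
    set τ := ε/4 * δm with hτ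
    have hτ0 : 0 < τ := by rw [hτ]; positivity
    -- helper to conclude once we have a candidate b with small dist and all
    -- radii up to b at least τ
    have build : ∀ b : Fin n, dist q (p b) ≤ (1 - ε/4) * δm →
        (∀ c : Fin n, 1 ≤ (c : ℕ) → (c : ℕ) ≤ (b : ℕ) → τ ≤ gpRadius p c) →
        ∃ b : Fin n, ((v m : ℕ) < (b : ℕ)) ∧ gpEdge p ε (v m) b ∧
          dist q (p b) ≤ (1 - ε/4) * δm ∧
          ∀ c : Fin n, 1 ≤ (c : ℕ) → (c : ℕ) ≤ (b : ℕ) → τ ≤ gpRadius p c := by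
      intro b hbq hbr
      have hvb : (v m : ℕ) < (b : ℕ) := by
        by_contra hh
        push_neg at hh
        have := hP b hh
        nlinarith
      have hb1 : 1 ≤ (b : ℕ) := by omega
      have hrb : τ ≤ gpRadius p b := hbr b hb1 le_rfl
      have hdb : dist (p (v m)) (p b) ≤ 2 * δm := by
        have h1 := dist_triangle (p (v m)) q (p b)
        rw [dist_comm (p (v m)) q] at h1
        nlinarith
      refine ⟨b, hvb, ⟨hvb, ?_⟩, hbq, hbr⟩
      rw [le_div_iff₀ hε]
      nlinarith
    by_cases hS : ∃ c : Fin n, 1 ≤ (c : ℕ) ∧ gpRadius p c < τ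
    · -- there are small radii; istar = first index with small radius
      set S : Finset (Fin n) :=
        Finset.univ.filter (fun c => 1 ≤ (c : ℕ) ∧ gpRadius p c < τ) with hSdef
      have hSne : S.Nonempty := by
        obtain ⟨c, hc1, hc2⟩ := hS
        exact ⟨c, by simp [hSdef, hc1, hc2]⟩
      set istar := S.min' hSne with histar
      have hmem : istar ∈ S := S.min'_mem hSne
      have hi1 : 1 ≤ (istar : ℕ) := by
        have := hmem; simp [hSdef] at this; exact this.1
      have hri : gpRadius p istar < τ := by
        have := hmem; simp [hSdef] at this; exact this.2
      have hbig : ∀ c : Fin n, 1 ≤ (c : ℕ) → (c : ℕ) < (istar : ℕ) →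
          τ ≤ gpRadius p c := by
        intro c h1 h2
        by_contra hh
        push_neg at hh
        have hcS : c ∈ S := by simp [hSdef, h1, hh]
        have := S.min'_le c hcS
        rw [← histar] at this
        have : (istar : ℕ) ≤ (c : ℕ) := this
        omega
      by_cases hti : (t : ℕ) < (istar : ℕ)
      · -- use t itself
        apply build t (by nlinarith [hDt.symm.le])
        intro c h1 h2
        exact hbig c h1 (by omega)
      · -- istar ≤ t : use a net point near t
        push_neg at hti
        have hcov : Metric.infDist (p t) (p '' {j : Fin n | (j : ℕ) < (istar : ℕ)}) < τ :=
          lt_of_le_of_lt (hp.2 istar t hti) hri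
        obtain ⟨y, hy, hyd2⟩ := (Metric.infDist_lt_iff (gp_prefix_ne istar hi1)).mp hcov
        obtain ⟨b, hb, rfl⟩ := hy
        have hbi : (b : ℕ) < (istar : ℕ) := hb
        have hqb : dist q (p b) ≤ (1 - ε/4) * δm := by
          have h1 := dist_triangle q (p t) (p b)
          rw [← hDt] at h1
          nlinarith
        apply build b hqb
        intro c h1 h2
        exact hbig c h1 (by omega)
    · -- all radii are at least τ
      push_neg at hS
      apply build t (by nlinarith [hDt.symm.le])
      intro c h1 _
      exact hS c h1
  -- the radius of the next walk vertex is large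
  have hB : ∀ m < k, P m → ε/4 * dist q (p (v m)) ≤ gpRadius p (v (m+1)) := by
    intro m hm hP
    obtain ⟨b, hvb, hedge, himp, hrad⟩ := hwit m hm.le hP
    have hle := (hstep m hm).2.2 b hedge himp
    exact hrad (v (m+1)) (by have := (hstep m hm).1.1; omega) hle
  -- the invariant is preserved
  have hPstep : ∀ m < k, P m → P (m+1) := by
    intro m hm hP a ha
    by_contra hcon2
    push_neg at hcon2
    have hmk : m + 1 ≤ k := hm
    have hδm1 : 0 < dist q (p (v (m+1))) := hδpos (m+1) hmk
    have hδm : 0 < dist q (p (v m)) := hδpos m hm.le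
    have hdd : dist q (p (v (m+1))) ≤ dist q (p (v m)) := hstep' m hm
    rcases Nat.lt_or_ge (v m : ℕ) (a : ℕ) with hvma | hvma
    · rcases Nat.lt_or_ge (a : ℕ) (v (m+1) : ℕ) with hav | hav
      · -- skipped vertex
        have h2 : dist q (p a) ≤ (1 - ε/4) * dist q (p (v m)) := by nlinarith
        by_cases hedge : gpEdge p ε (v m) a
        · have := (hstep m hm).2.2 a hedge h2
          omega
        · have hnd : ¬ dist (p (v m)) (p a) ≤ 8 * gpRadius p a / ε :=
            fun h => hedge ⟨hvma, h⟩
          push_neg at hnd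
          have hra : ε/4 * dist q (p (v m)) ≤ gpRadius p a :=
            le_trans (hB m hm hP) (gp_mono hp a (v (m+1)) (by omega) (by omega))
          have h3 : 8 * gpRadius p a / ε ≥ 2 * dist q (p (v m)) := by
            rw [ge_iff_le, le_div_iff₀ hε]
            nlinarith
          have h4 : dist (p (v m)) (p a) ≤ 2 * dist q (p (v m)) := by
            have h5 := dist_triangle (p (v m)) q (p a)
            rw [dist_comm (p (v m)) q] at h5
            nlinarith
          linarith
      · -- a = v (m+1)
        have hae : a = v (m+1) := Fin.ext (by omega)
        rw [hae] at hcon2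
        nlinarith
    · -- a ≤ v m
      have := hP a hvma
      nlinarith
  have hPall : ∀ m ≤ k, P m := by
    intro m
    induction m with
    | zero =>
      intro _ a ha
      have hae : a = v 0 := Fin.ext (by omega)
      rw [hae]
      have := hδpos 0 (Nat.zero_le k)
      nlinarith
    | succ m ih =>
      intro h
      exact hPstep m (by omega) (ih (by omega))
  obtain ⟨b, hvb, hedge, himp, _⟩ := hwit k le_rfl (hPall k le_rfl)
  exact hmax b hedge himp

end Walk

section Len
open Metric Real
variable {X : Type*} [MetricSpace X] {n : ℕ} {p : Fin n → X} {ε : ℝ}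

lemma walk_len (hn : 2 ≤ n) (hp : IsGreedyPerm p) (hε : 0 < ε) (hε2 : ε ≤ 1/2)
    {Φ : ℝ}
    (hΦ : Φ = Metric.diam (Set.range p) /
        sInf {r : ℝ | ∃ a b : Fin n, a ≠ b ∧ r = dist (p a) (p b)})
    (q : X) (v : ℕ → Fin n) (k : ℕ)
    (hstep : ∀ m < k,
      gpEdge p ε (v m) (v (m + 1)) ∧
      dist q (p (v (m + 1))) ≤ (1 - ε / 4) * dist q (p (v m)) ∧
      (∀ i : Fin n, gpEdge p ε (v m) i →
        dist q (p i) ≤ (1 - ε / 4) * dist q (p (v m)) →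
        (v (m + 1) : ℕ) ≤ (i : ℕ))) :
    (k : ℝ) ≤ 9 * ε⁻¹ * (1 + Real.logb 2 (1 + Φ)) := by
  have hn0 : 0 < n := by omega
  set S : Set ℝ := {r : ℝ | ∃ a b : Fin n, a ≠ b ∧ r = dist (p a) (p b)} with hSdef
  set cp := sInf S with hcpdef
  set dm := Metric.diam (Set.range p) with hdm
  -- basic facts about cp and dm
  have hSne : S.Nonempty := by
    refine ⟨dist (p ⟨0, by omega⟩) (p ⟨1, by omega⟩), ⟨0, by omega⟩, ⟨1, by omega⟩, ?_, rfl⟩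
    intro h
    have := congrArg (Fin.val) h
    simp at this
  have hSsub : S ⊆ Set.range (fun ab : Fin n × Fin n => dist (p ab.1) (p ab.2)) := by
    rintro r ⟨a, b, hab, rfl⟩
    exact ⟨(a, b), rfl⟩
  have hSfin : S.Finite := (Set.finite_range _).subset hSsub
  have hcp_mem : cp ∈ S := hSne.csInf_mem hSfin
  have hcp_pos : 0 < cp := by
    obtain ⟨a, b, hab, he⟩ := hcp_mem
    rw [hcpdef] at he ⊢
    rw [he]
    exact dist_pos.mpr (fun hc => hab (hp.1 hc))
  have hcp_le : ∀ a b : Fin n, a ≠ b → cp ≤ dist (p a) (p b) :=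
    fun a b hab => csInf_le hSfin.bddBelow ⟨a, b, hab, rfl⟩
  have hdm0 : 0 ≤ dm := Metric.diam_nonneg
  have hΦ0 : 0 ≤ Φ := by rw [hΦ]; exact div_nonneg hdm0 hcp_pos.le
  have hlogb0 : 0 ≤ Real.logb 2 (1 + Φ) :=
    Real.logb_nonneg (by norm_num) (by linarith)
  have hεinv : (2:ℝ) ≤ ε⁻¹ := by
    rw [le_inv_comm₀] <;> norm_num <;> linarith
  rcases Nat.eq_zero_or_pos k with hk0 | hkpos
  · rw [hk0]
    push_cast
    positivity
  -- k ≥ 1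
  obtain ⟨j, rfl⟩ : ∃ j, k = j + 1 := ⟨k - 1, by omega⟩
  set β : ℝ := 1 - ε/4 with hβ
  have hβpos : 0 < β := by rw [hβ]; linarith
  have hβlt : β < 1 := by rw [hβ]; linarith
  have hstep' : ∀ m < j + 1, dist q (p (v (m+1))) ≤ dist q (p (v m)) := by
    intro m hm
    have h1 := (hstep m hm).2.1
    nlinarith [dist_nonneg (x := q) (y := p (v m))]
  have hgeo : ∀ m ≤ j + 1, dist q (p (v m)) ≤ β ^ m * dist q (p (v 0)) := by
    intro m hm
    induction m with
    | zero => simp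
    | succ m ih =>
      calc dist q (p (v (m+1))) ≤ β * dist q (p (v m)) := (hstep m (by omega)).2.1
        _ ≤ β * (β ^ m * dist q (p (v 0))) :=
            mul_le_mul_of_nonneg_left (ih (by omega)) hβpos.le
        _ = β ^ (m+1) * dist q (p (v 0)) := by ring
  -- lower bound on dist at step j
  have hvne : v j ≠ v (j+1) := by
    have := (hstep j (by omega)).1.1
    intro h; rw [h] at this; omega
  have hcp2 : cp ≤ 2 * dist q (p (v j)) := by
    have h1 := hcp_le (v j) (v (j+1)) hvne
    have h2 := dist_triangle (p (v j)) q (p (v (j+1)))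
    rw [dist_comm (p (v j)) q] at h2
    have h3 := hstep' j (by omega)
    linarith
  have hδj_pos : 0 < dist q (p (v j)) := by linarith
  have hδ0_le : dist q (p (v 0)) ≤ dist q (p (v j)) + dm := by
    have h1 := dist_triangle q (p (v j)) (p (v 0))
    have h2 : dist (p (v j)) (p (v 0)) ≤ dm :=
      Metric.dist_le_diam_of_mem ((Set.finite_range p).isBounded)
        (Set.mem_range_self _) (Set.mem_range_self _)
    linarith
  have hΦcp : Φ * cp = dm := by rw [hΦ]; field_simp
  have hβj : 1 ≤ β ^ j * (1 + 2 * Φ) := by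
    have e1 : dist q (p (v j)) ≤ β ^ j * (dist q (p (v j)) + dm) :=
      le_trans (hgeo j (by omega)) (mul_le_mul_of_nonneg_left hδ0_le (by positivity))
    have e2 : dist q (p (v j)) + dm ≤ dist q (p (v j)) * (1 + 2 * Φ) := by
      nlinarith [mul_le_mul_of_nonneg_right hcp2 hΦ0]
    have e3 : dist q (p (v j)) * 1 ≤ dist q (p (v j)) * (β ^ j * (1 + 2 * Φ)) := by
      calc dist q (p (v j)) * 1 = dist q (p (v j)) := by ring
        _ ≤ β ^ j * (dist q (p (v j)) * (1 + 2 * Φ)) := by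
            refine le_trans e1 (mul_le_mul_of_nonneg_left e2 (by positivity))
        _ = dist q (p (v j)) * (β ^ j * (1 + 2 * Φ)) := by ring
    exact le_of_mul_le_mul_left e3 hδj_pos
  -- take logs
  have h1p : (1:ℝ) ≤ 1 + 2 * Φ := by linarith
  have hlog1 : 0 ≤ j * Real.log β + Real.log (1 + 2 * Φ) := by
    have := Real.log_le_log (by norm_num) hβj
    rw [Real.log_mul (by positivity) (by linarith), Real.log_pow] at this
    simpa using this
  have hlogβ : Real.log β ≤ -(ε/4) := by
    have := Real.log_le_sub_one_of_pos hβpos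
    rw [hβ] at this ⊢
    linarith
  have hjε : (j : ℝ) * (ε/4) ≤ Real.log (1 + 2 * Φ) := by
    have h2 : (j : ℝ) * (-(ε/4)) ≥ (j:ℝ) * Real.log β :=
      mul_le_mul_of_nonneg_left hlogβ (Nat.cast_nonneg j)
    linarith
  have hlog2 : Real.log (1 + 2 * Φ) ≤ 2 * Real.log (1 + Φ) := by
    have h3 : (1 + 2*Φ : ℝ) ≤ (1 + Φ)^2 := by nlinarith
    have h4 := Real.log_le_log (by linarith) h3
    rwa [Real.log_pow, Nat.cast_ofNat] at h4
  have hloglogb : Real.log (1 + Φ) ≤ Real.logb 2 (1 + Φ) := by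
    rw [Real.logb, le_div_iff₀ (Real.log_pos (by norm_num))]
    have hl2 : Real.log 2 < 1 := by
      have := Real.log_two_lt_d9
      linarith
    have hl0 : 0 ≤ Real.log (1 + Φ) := Real.log_nonneg (by linarith)
    nlinarith
  -- put it together
  have hjb : (j : ℝ) * (ε/4) ≤ 2 * Real.logb 2 (1 + Φ) := by linarith
  have hj8 : (j : ℝ) ≤ 8 * ε⁻¹ * Real.logb 2 (1 + Φ) := by
    have h5 := mul_le_mul_of_nonneg_right hjb (by positivity : (0:ℝ) ≤ 4 * ε⁻¹)
    have h6 : (j : ℝ) * (ε/4) * (4 * ε⁻¹) = (j : ℝ) := by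
      field_simp
    rw [h6] at h5
    linarith [h5]
  have : ((j + 1 : ℕ) : ℝ) = (j : ℝ) + 1 := by push_cast; ring
  rw [this]
  have h7 : (1:ℝ) ≤ 9 * ε⁻¹ := by linarith
  have h8 : 8 * ε⁻¹ * Real.logb 2 (1 + Φ) ≤ 9 * ε⁻¹ * Real.logb 2 (1 + Φ) := by
    nlinarith
  nlinarith [mul_nonneg (by positivity : (0:ℝ) ≤ 9 * ε⁻¹) hlogb0]

end Len


lemma walk_len_aux {X : Type*} [MetricSpace X] {n : ℕ} {p : Fin n → X} {Φ : ℝ}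
    (hn : 2 ≤ n) (hp : IsGreedyPerm p)
    (hΦ : Φ = Metric.diam (Set.range p) /
        sInf {r : ℝ | ∃ a b : Fin n, a ≠ b ∧ r = dist (p a) (p b)}) : 0 ≤ Φ := by
  set S : Set ℝ := {r : ℝ | ∃ a b : Fin n, a ≠ b ∧ r = dist (p a) (p b)} with hSdef
  have hSne : S.Nonempty := by
    refine ⟨dist (p ⟨0, by omega⟩) (p ⟨1, by omega⟩), ⟨0, by omega⟩, ⟨1, by omega⟩, ?_, rfl⟩
    intro h
    have := congrArg (Fin.val) h
    simp at this
  have hSsub : S ⊆ Set.range (fun ab : Fin n × Fin n => dist (p ab.1) (p ab.2)) := by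
    rintro r ⟨a, b, hab, rfl⟩
    exact ⟨(a, b), rfl⟩
  have hSfin : S.Finite := (Set.finite_range _).subset hSsub
  have hcp_mem : sInf S ∈ S := hSne.csInf_mem hSfin
  have hcp_pos : 0 < sInf S := by
    obtain ⟨a, b, hab, he⟩ := hcp_mem
    rw [he]
    exact dist_pos.mpr (fun hc => hab (hp.1 hc))
  rw [hΦ]
  exact div_nonneg Metric.diam_nonneg hcp_pos.le

/-- **ANN via greedy walks on the greedy-permutation graph.** For every `d ≥ 1`
there is `C = C(d) > 0` such that for every exact greedy permutation of `n ≥ 2`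
points of `ℝ^d` with spread `Φ` and every `ε ∈ (0,1/2]`, the greedy-permutation
graph `E` satisfies: (a) `|E| ≤ C n ε⁻ᵈ`; and (b) for every query `q`, every
first-improving greedy walk `v₀ = p₁, v₁, v₂, …` (each step moves to the improving
out-neighbor of smallest index, where improving means the distance to `q` drops by
a factor `1 - ε/4`) has at most `C ε⁻¹ (1 + log₂(1 + Φ))` steps, and if it is
maximal (no improving out-neighbor at the final vertex) its final vertex is a
`(1+ε)`-approximate nearest neighbor of `q`. -/
theorem stmt_10 (d : ℕ) (hd : 1 ≤ d) :
    ∃ C : ℝ, 0 < C ∧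
      ∀ (n : ℕ), 2 ≤ n →
      ∀ p : Fin n → EuclideanSpace ℝ (Fin d), IsGreedyPerm p →
      ∀ Φ : ℝ,
        Φ = Metric.diam (Set.range p) /
              sInf {r : ℝ | ∃ a b : Fin n, a ≠ b ∧ r = dist (p a) (p b)} →
      ∀ ε : ℝ, ε ∈ Set.Ioc (0 : ℝ) (1 / 2) →
      -- (a) the graph has at most `C n / ε^d` edges
      ((Nat.card {e : Fin n × Fin n | gpEdge p ε e.1 e.2} : ℝ) ≤ C * n / ε ^ d) ∧
      -- (b) greedy walks are short and, if maximal, end at a (1+ε)-ANN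
      (∀ q : EuclideanSpace ℝ (Fin d), ∀ v : ℕ → Fin n, ∀ k : ℕ,
        (v 0 : ℕ) = 0 →
        (∀ m < k,
          gpEdge p ε (v m) (v (m + 1)) ∧
          dist q (p (v (m + 1))) ≤ (1 - ε / 4) * dist q (p (v m)) ∧
          (∀ i : Fin n, gpEdge p ε (v m) i →
            dist q (p i) ≤ (1 - ε / 4) * dist q (p (v m)) →
            (v (m + 1) : ℕ) ≤ (i : ℕ))) →
        (k : ℝ) ≤ C * ε⁻¹ * (1 + Real.logb 2 (1 + Φ)) ∧
        ((∀ i : Fin n, gpEdge p ε (v k) i →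
            ¬(dist q (p i) ≤ (1 - ε / 4) * dist q (p (v k)))) →
          dist q (p (v k)) ≤ (1 + ε) * Metric.infDist q (Set.range p))) := by
  classical
  refine ⟨17 ^ d + 9, by positivity, ?_⟩
  intro n hn p hp Φ hΦ ε hε
  obtain ⟨hε0, hε2⟩ := hε
  have h179 : (17:ℝ)^d ≤ 17^d + 9 := by norm_num
  refine ⟨?_, ?_⟩
  · calc ((Nat.card {e : Fin n × Fin n | gpEdge p ε e.1 e.2} : ℕ) : ℝ)
        ≤ (17:ℝ)^d * n / ε^d := edge_count hd hp hε0 hε2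
      _ ≤ (17^d + 9) * n / ε^d := by
          apply div_le_div_of_nonneg_right ?_ (by positivity)
          exact mul_le_mul_of_nonneg_right h179 (Nat.cast_nonneg n)
  · intro q v k hv0 hstep
    refine ⟨?_, ?_⟩
    · have h1 := walk_len hn hp hε0 hε2 hΦ q v k hstep
      have h2 := walk_len_aux hn hp hΦ
      have h3 : (0:ℝ) ≤ 1 + Real.logb 2 (1 + Φ) := by
        have := Real.logb_nonneg (by norm_num : (1:ℝ) < 2) (by linarith : (1:ℝ) ≤ 1 + Φ)
        linarith
      calc (k : ℝ) ≤ 9 * ε⁻¹ * (1 + Real.logb 2 (1 + Φ)) := h1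
        _ ≤ (17^d + 9) * ε⁻¹ * (1 + Real.logb 2 (1 + Φ)) := by
            have h9 : (9:ℝ) ≤ 17^d + 9 := by nlinarith [pow_pos (by norm_num : (0:ℝ) < 17) d]
            have hi : (0:ℝ) ≤ ε⁻¹ := by positivity
            nlinarith [mul_nonneg hi h3]
    · intro hmax
      exact walk_ann hp hε0 hε2 q v k hv0 hstep hmax
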